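/- Let T > 0, 0 < γ ≤ Γ ≤ T, Δt > 0 with K = T/Δt a positive integer and γ/Δt, Γ/Δt positive integers, and let N be a positive integer. Define the refined discrete set D⁺_{KN} = { δ ∈ [0,1]^{KN} : Σ_{l = 1+max(m−NΓ/Δt,0)}^{m} δ_l ≤ Nγ/Δt for every m ∈ {1,…,KN} }, the refined lifting operator L_N which sends δ ∈ ℝ^{KN} (indexed by (k,n) with k ∈ {1,…,K}, n ∈ {1,…,N}) to the piecewise constant function equal to δ_{(k−1)N+n} on [Δt(k−1+(n−1)/N), Δt(k−1+n/N)), and the refined averaging operator L†_N which sends an integrable w on [0,T] to the vector with components (N/Δt)·∫ over the corresponding subinterval of w. Then L_N(D⁺_{KN}) ⊆ D⁺ and L†_N(D⁺) = D⁺_{KN}. -/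

import Mathlib

open MeasureTheory Set

noncomputable section

/-- The continuous-time uncertainty set `D` of measurable frequency-deviation
scenarios `δ : [0,T] → [-1,1]` whose total absolute deviation over every
backward window of length `Γ` is at most `γ`. -/
def Dset (T Γ γ : ℝ) : Set (ℝ → ℝ) :=
  {δ | Measurable δ ∧ (∀ t ∈ Icc (0:ℝ) T, δ t ∈ Icc (-1:ℝ) 1) ∧
    ∀ t ∈ Icc (0:ℝ) T, (∫ s in (max (t - Γ) 0)..t, |δ s|) ≤ γ}

/-- The nonnegative part `D⁺` of the continuous uncertainty set. -/
def DsetPlus (T Γ γ : ℝ) : Set (ℝ → ℝ) :=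
  Dset T Γ γ ∩ {δ | ∀ t ∈ Icc (0:ℝ) T, δ t ∈ Icc (0:ℝ) 1}

/-- The discrete uncertainty set `D_K` (with `0`-based indexing): vectors in
`[-1,1]^K` whose sum of absolute values over each backward window of `W = Γ/Δt`
periods is at most `g = γ/Δt`. -/
def DK (K W g : ℕ) : Set (Fin K → ℝ) :=
  {δ | (∀ l, |δ l| ≤ 1) ∧ ∀ k : Fin K,
    (∑ l ∈ Finset.univ.filter
      (fun l : Fin K => (k : ℕ) + 1 - W ≤ (l : ℕ) ∧ (l : ℕ) ≤ (k : ℕ)), |δ l|) ≤ (g : ℝ)}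

/-- The nonnegative part `D_K⁺` of the discrete uncertainty set. -/
def DKplus (K W g : ℕ) : Set (Fin K → ℝ) :=
  DK K W g ∩ {δ | ∀ l, 0 ≤ δ l}

/-- The lifting operator `L` mapping a vector to the piecewise constant function
with value `v k` on `[kΔt, (k+1)Δt)` (0-based), and `v (K-1)` at `t = KΔt`. -/
def lift (Δt : ℝ) {K : ℕ} (v : Fin K → ℝ) : ℝ → ℝ := fun t =>
  if h : min (⌊t / Δt⌋.toNat) (K - 1) < K then v ⟨min (⌊t / Δt⌋.toNat) (K - 1), h⟩ else 0

/-- The averaging operator `L†` mapping a function to its vector of averages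
over the trading intervals. -/
def avg (Δt : ℝ) (K : ℕ) (w : ℝ → ℝ) : Fin K → ℝ := fun k =>
  (1 / Δt) * ∫ s in (((k : ℕ) : ℝ) * Δt)..((((k : ℕ) : ℝ) + 1) * Δt), w s

/-- The integrand of the continuous-time state-of-charge. -/
def socIntegrand (ηp ηm : ℝ) (xb xr δ d : ℝ → ℝ) (s : ℝ) : ℝ :=
  ηp * max (xb s + δ s * xr s) 0 - (1 / ηm) * max (-(xb s + δ s * xr s)) 0 - d s

/-- The continuous-time state-of-charge `y(x^b, x^r, δ, y₀, t)`. -/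
def soc (ηp ηm : ℝ) (xb xr δ d : ℝ → ℝ) (y0 t : ℝ) : ℝ :=
  y0 + ∫ s in (0:ℝ)..t, socIntegrand ηp ηm xb xr δ d s

/-- The discrete-time state-of-charge `y_k(𝐱^b, 𝐱^r, 𝛅, y₀)` (0-based indexing:
the sum extends over the first `k` components). -/
def ysoc (Δt ηp ηm : ℝ) {K : ℕ} (xb xr δ d : Fin K → ℝ) (y0 : ℝ) (k : ℕ) : ℝ :=
  y0 + Δt * ∑ l ∈ Finset.univ.filter (fun l : Fin K => (l : ℕ) < k),
    (ηp * max (xb l + δ l * xr l) 0 - (1 / ηm) * max (-(xb l + δ l * xr l)) 0 - d l)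

/-! ### Auxiliary definitions and lemmas -/

/-- Extension of a `Fin K`-indexed vector to `ℕ` by zero. -/
def vext {K : ℕ} (v : Fin K → ℝ) : ℕ → ℝ := fun l => if h : l < K then v ⟨l, h⟩ else 0

lemma vext_lt {K : ℕ} (v : Fin K → ℝ) {l : ℕ} (h : l < K) : vext v l = v ⟨l, h⟩ := dif_pos h

lemma vext_abs {K : ℕ} (v : Fin K → ℝ) (l : ℕ) :
    vext (fun m => |v m|) l = |vext v l| := by
  unfold vext; split <;> simp

lemma vext_nonneg {K : ℕ} {v : Fin K → ℝ} (hv : ∀ l, 0 ≤ v l) (l : ℕ) : 0 ≤ vext v l := by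
  unfold vext; split
  · exact hv _
  · exact le_refl 0

lemma lift_eq_vext {Δt : ℝ} (hΔt : 0 < Δt) {K : ℕ} (v : Fin K → ℝ) {k : ℕ} (hk : k < K)
    {s : ℝ} (h1 : (k : ℝ) * Δt ≤ s) (h2 : s < ((k : ℝ) + 1) * Δt) :
    lift Δt v s = vext v k := by
  have hfloor : ⌊s / Δt⌋ = (k : ℤ) := by
    rw [Int.floor_eq_iff]
    constructor
    · push_cast
      exact (le_div_iff₀ hΔt).2 (by linarith)
    · push_cast
      exact (div_lt_iff₀ hΔt).2 (by linarith)
  have hmin : min (⌊s / Δt⌋.toNat) (K - 1) = k := by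
    rw [hfloor]
    simp only [Int.toNat_natCast]
    exact min_eq_left (by omega)
  simp only [lift, hmin, vext]

lemma lift_measurable {Δt : ℝ} {K : ℕ} (v : Fin K → ℝ) : Measurable (lift Δt v) := by
  have h : lift Δt v =
      (fun n : ℕ => if h : min n (K - 1) < K then v ⟨min n (K - 1), h⟩ else 0) ∘
      (fun t : ℝ => (⌊t / Δt⌋).toNat) := rfl
  rw [h]
  exact measurable_from_top.comp
    ((measurable_from_top (f := Int.toNat)).comp
      (Int.measurable_floor.comp (measurable_id.div_const Δt)))

lemma abs_lift_le {Δt : ℝ} {K : ℕ} {v : Fin K → ℝ} (hv : ∀ l, |v l| ≤ 1) (s : ℝ) :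
    |lift Δt v s| ≤ 1 := by
  unfold lift; split
  · exact hv _
  · simp

lemma lift_nonneg {Δt : ℝ} {K : ℕ} {v : Fin K → ℝ} (hv : ∀ l, 0 ≤ v l) (s : ℝ) :
    0 ≤ lift Δt v s := by
  unfold lift; split
  · exact hv _
  · exact le_refl 0

lemma intervalIntegrable_of_abs_le {f : ℝ → ℝ} (hm : Measurable f) {a b : ℝ}
    (hb : ∀ s ∈ Set.uIoc a b, |f s| ≤ 1) : IntervalIntegrable f volume a b := by
  rw [intervalIntegrable_iff]
  apply MeasureTheory.Measure.integrableOn_of_bounded (M := 1) measure_Ioc_lt_top.ne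
    hm.aestronglyMeasurable
  rw [ae_restrict_iff' measurableSet_Ioc]
  exact Filter.Eventually.of_forall (fun s hs => by simpa [Real.norm_eq_abs] using hb s hs)

lemma ae_ne_real (b : ℝ) : ∀ᵐ s : ℝ, s ≠ b := by
  rw [Filter.eventually_iff, mem_ae_iff]
  have h : {s : ℝ | s ≠ b}ᶜ = {b} := by ext s; simp
  rw [h]
  exact measure_singleton b

lemma integral_lift_const {Δt : ℝ} (hΔt : 0 < Δt) {K : ℕ} (v : Fin K → ℝ) {k : ℕ} (hk : k < K)
    {a b : ℝ} (h1 : (k : ℝ) * Δt ≤ a) (hab : a ≤ b) (h2 : b ≤ ((k : ℝ) + 1) * Δt) :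
    ∫ s in a..b, lift Δt v s = (b - a) * vext v k := by
  rw [intervalIntegral.integral_of_le hab]
  rw [setIntegral_congr_ae measurableSet_Ioc (g := fun _ => vext v k) ?_]
  · rw [setIntegral_const, Real.volume_real_Ioc_of_le hab, smul_eq_mul]
  · filter_upwards [ae_ne_real b] with s hs hmem
    exact lift_eq_vext hΔt v hk (h1.trans hmem.1.le)
      (lt_of_lt_of_le (lt_of_le_of_ne hmem.2 hs) h2)

lemma integral_lift_blocks {Δt : ℝ} (hΔt : 0 < Δt) {K : ℕ} (v : Fin K → ℝ)
    (hv : ∀ l, |v l| ≤ 1) {i j : ℕ} (hij : i ≤ j) (hjK : j ≤ K) :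
    ∫ s in ((i : ℝ) * Δt)..((j : ℝ) * Δt), lift Δt v s = Δt * ∑ l ∈ Finset.Ico i j, vext v l := by
  rw [← intervalIntegral.sum_integral_adjacent_intervals_Ico (a := fun n : ℕ => (n : ℝ) * Δt)
    hij (fun k _ => intervalIntegrable_of_abs_le (lift_measurable v) (fun s _ => abs_lift_le hv s))]
  rw [Finset.mul_sum]
  apply Finset.sum_congr rfl
  intro n hn
  rw [Finset.mem_Ico] at hn
  have hnK : n < K := lt_of_lt_of_le hn.2 hjK
  have heq : ∫ s in ((n : ℝ) * Δt)..(((n : ℝ) + 1) * Δt), lift Δt v s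
      = (((n : ℝ) + 1) * Δt - (n : ℝ) * Δt) * vext v n :=
    integral_lift_const hΔt v hnK le_rfl (by nlinarith) le_rfl
  have hcast : ((n + 1 : ℕ) : ℝ) = (n : ℝ) + 1 := by push_cast; ring
  simp only [hcast]
  rw [heq]; ring

lemma filter_sum_eq {K : ℕ} (f : Fin K → ℝ) (a c : ℕ) (hcK : c < K) :
    ∑ l ∈ Finset.univ.filter (fun l : Fin K => a ≤ (l : ℕ) ∧ (l : ℕ) ≤ c), f l
      = ∑ l ∈ Finset.Ico a (c + 1), vext f l := by
  rw [Finset.sum_filter]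
  have h1 : ∀ l : Fin K, (if a ≤ (l : ℕ) ∧ (l : ℕ) ≤ c then f l else 0)
      = (fun m : ℕ => if a ≤ m ∧ m ≤ c then vext f m else 0) (l : ℕ) := by
    intro l
    simp only [vext_lt f l.isLt]
  simp only [h1]
  rw [Fin.sum_univ_eq_sum_range (fun m : ℕ => if a ≤ m ∧ m ≤ c then vext f m else 0) K]
  rw [← Finset.sum_filter]
  apply Finset.sum_congr _ (fun _ _ => rfl)
  ext m
  simp only [Finset.mem_filter, Finset.mem_range, Finset.mem_Ico]
  omega

set_option maxHeartbeats 2000000 in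
/-- The main statement, for a single discretization level. -/
lemma main_discretization (Δt : ℝ) (K W g : ℕ) (hΔt : 0 < Δt)
    (hg : 0 < g) (hgW : g ≤ W) (hWK : W ≤ K) :
    (∀ δ ∈ DKplus K W g, lift Δt δ ∈ DsetPlus ((K : ℝ) * Δt) ((W : ℝ) * Δt) ((g : ℝ) * Δt)) ∧
    (∀ δ ∈ DsetPlus ((K : ℝ) * Δt) ((W : ℝ) * Δt) ((g : ℝ) * Δt),
      avg Δt K δ ∈ DKplus K W g) ∧
    (∀ v ∈ DKplus K W g,
      ∃ δ ∈ DsetPlus ((K : ℝ) * Δt) ((W : ℝ) * Δt) ((g : ℝ) * Δt), avg Δt K δ = v) := by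
  have hK : 0 < K := lt_of_lt_of_le (lt_of_lt_of_le hg hgW) hWK
  have hW : 0 < W := lt_of_lt_of_le hg hgW
  -- Part 1
  have part1 : ∀ δ ∈ DKplus K W g,
      lift Δt δ ∈ DsetPlus ((K : ℝ) * Δt) ((W : ℝ) * Δt) ((g : ℝ) * Δt) := by
    rintro δ ⟨⟨hδ1, hδ2⟩, hδ0⟩
    have hliftpos : ∀ s, 0 ≤ lift Δt δ s := lift_nonneg hδ0
    have hlift01 : ∀ t ∈ Icc (0 : ℝ) ((K : ℝ) * Δt), lift Δt δ t ∈ Icc (0 : ℝ) 1 := by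
      intro t _
      exact ⟨hliftpos t, (abs_le.1 (abs_lift_le hδ1 (Δt := Δt) t)).2⟩
    have hvpos : ∀ m, 0 ≤ vext δ m := vext_nonneg hδ0
    have hvle : ∀ m, vext δ m ≤ 1 := by
      intro m
      unfold vext; split
      · exact (abs_le.1 (hδ1 _)).2
      · exact zero_le_one
    -- window sums in `Ico` form
    have hS : ∀ i j : ℕ, 0 < j → j ≤ K → j ≤ i + W →
        (∑ l ∈ Finset.Ico i j, vext δ l) ≤ (g : ℝ) := by
      intro i j hj0 hjK hjiW
      rcases le_or_gt j i with h | h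
      · rw [Finset.Ico_eq_empty (by omega), Finset.sum_empty]
        positivity
      · have hc : j - 1 < K := by omega
        have h2 := hδ2 ⟨j - 1, hc⟩
        rw [filter_sum_eq (fun l => |δ l|) (((j : ℕ) - 1) + 1 - W) (j - 1) hc] at h2
        have hco : (j - 1) + 1 = j := by omega
        rw [hco] at h2
        calc ∑ l ∈ Finset.Ico i j, vext δ l
            ≤ ∑ l ∈ Finset.Ico (j - W) j, vext δ l :=
              Finset.sum_le_sum_of_subset_of_nonneg
                (Finset.Ico_subset_Ico (by omega) le_rfl) (fun m _ _ => hvpos m)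
          _ ≤ ∑ l ∈ Finset.Ico (j - W) j, vext (fun l => |δ l|) l :=
              Finset.sum_le_sum (fun m _ => by rw [vext_abs]; exact le_abs_self _)
          _ ≤ (g : ℝ) := h2
    have hInt : ∀ c d : ℝ, IntervalIntegrable (lift Δt δ) volume c d :=
      fun c d => intervalIntegrable_of_abs_le (lift_measurable δ) (fun s _ => abs_lift_le hδ1 s)
    refine ⟨⟨lift_measurable δ, ?_, ?_⟩, hlift01⟩
    · intro t ht
      have := hlift01 t ht
      exact ⟨by linarith [this.1], this.2⟩
    · intro t ht
      set a : ℝ := max (t - (W : ℝ) * Δt) 0 with ha_def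
      have ha0 : 0 ≤ a := le_max_right _ _
      have hWpos : (0 : ℝ) < (W : ℝ) * Δt := by
        have : (0 : ℝ) < (W : ℝ) := by exact_mod_cast hW
        positivity
      have hab : a ≤ t := max_le (by linarith [ht.1]) ht.1
      have hbT : t ≤ (K : ℝ) * Δt := ht.2
      have hbaW : t ≤ a + (W : ℝ) * Δt := by
        have : t - (W : ℝ) * Δt ≤ a := le_max_left _ _
        linarith
      have habs : (∫ s in a..t, |lift Δt δ s|) = ∫ s in a..t, lift Δt δ s :=
        intervalIntegral.integral_congr (fun s _ => abs_of_nonneg (hliftpos s))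
      rw [habs]
      rcases eq_or_lt_of_le hab with heq | hlt
      · rw [← heq, intervalIntegral.integral_same]
        positivity
      have haT : a < (K : ℝ) * Δt := lt_of_lt_of_le hlt hbT
      set k0 : ℕ := ⌊a / Δt⌋₊ with hk0_def
      have hdiv0 : 0 ≤ a / Δt := div_nonneg ha0 hΔt.le
      have h0le : (k0 : ℝ) * Δt ≤ a := by
        have h := Nat.floor_le hdiv0
        calc (k0 : ℝ) * Δt ≤ (a / Δt) * Δt := by nlinarith
        _ = a := by field_simp
      have h0lt : a < ((k0 : ℝ) + 1) * Δt := by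
        have h := Nat.lt_floor_add_one (a / Δt)
        calc a = (a / Δt) * Δt := by field_simp
        _ < ((k0 : ℝ) + 1) * Δt := by nlinarith
      have hk0K : k0 < K := by
        rw [hk0_def, Nat.floor_lt hdiv0, div_lt_iff₀ hΔt]
        exact haT
      set j1 : ℕ := min (k0 + W) K with hj1_def
      have hj1K : j1 ≤ K := min_le_right _ _
      have hj1W : j1 ≤ k0 + W := min_le_left _ _
      have hk0j1 : k0 < j1 := lt_min (by omega) hk0K
      have hnn : ∀ (c d : ℝ), 0 ≤ᵐ[volume.restrict (Ioc c d)] (lift Δt δ) :=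
        fun c d => Filter.Eventually.of_forall hliftpos
      rcases le_or_gt t ((j1 : ℝ) * Δt) with hcase | hcase
      · -- Case A : t ≤ j1 Δt
        have hle : (∫ s in a..t, lift Δt δ s) ≤
            ∫ s in ((k0 : ℝ) * Δt)..((j1 : ℝ) * Δt), lift Δt δ s :=
          intervalIntegral.integral_mono_interval h0le hab hcase (hnn _ _) (hInt _ _)
        rw [integral_lift_blocks hΔt δ hδ1 hk0j1.le hj1K] at hle
        have hsum := hS k0 j1 (by omega) hj1K hj1W
        calc (∫ s in a..t, lift Δt δ s) ≤ Δt * ∑ l ∈ Finset.Ico k0 j1, vext δ l := hle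
          _ ≤ Δt * g := by nlinarith
          _ = (g : ℝ) * Δt := by ring
      · -- Case B : j1 Δt < t
        have hj1eq : j1 = k0 + W := by
          rcases Nat.lt_or_ge (k0 + W) K with h | h
          · exact min_eq_left h.le
          · exfalso
            have : j1 = K := min_eq_right h
            rw [this] at hcase
            linarith
        have hkWK : k0 + W < K := by
          rcases Nat.lt_or_ge (k0 + W) K with h | h
          · exact h
          · exfalso
            have : j1 = K := min_eq_right h
            rw [this] at hcase
            linarith
        set t1 : ℝ := ((k0 + W : ℕ) : ℝ) * Δt with ht1_def
        have ht1cast : t1 = ((k0 : ℝ) + (W : ℝ)) * Δt := by rw [ht1_def]; push_cast; ring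
        have hat1 : a ≤ t1 := by
          have : ((k0 : ℝ) + 1) * Δt ≤ t1 := by
            rw [ht1cast]
            have : (1 : ℝ) ≤ (W : ℝ) := by exact_mod_cast hW
            nlinarith
          linarith
        have ht1b : t1 < t := by
          have : ((j1 : ℕ) : ℝ) * Δt = t1 := by rw [hj1eq, ht1_def]
          linarith
        have hbt2 : t ≤ ((k0 : ℝ) + (W : ℝ) + 1) * Δt := by
          nlinarith
        -- split the integral
        have hsplit : (∫ s in a..t, lift Δt δ s)
            = (∫ s in a..t1, lift Δt δ s) + ∫ s in t1..t, lift Δt δ s :=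
          (intervalIntegral.integral_add_adjacent_intervals (hInt a t1) (hInt t1 t)).symm
        have hsplit2 : (∫ s in ((k0 : ℝ) * Δt)..a, lift Δt δ s)
            + (∫ s in a..t1, lift Δt δ s) = ∫ s in ((k0 : ℝ) * Δt)..t1, lift Δt δ s :=
          intervalIntegral.integral_add_adjacent_intervals (hInt _ a) (hInt a t1)
        have hI1 : (∫ s in ((k0 : ℝ) * Δt)..a, lift Δt δ s) = (a - (k0 : ℝ) * Δt) * vext δ k0 :=
          integral_lift_const hΔt δ hk0K le_rfl h0le h0lt.le
        have hI2 : (∫ s in ((k0 : ℝ) * Δt)..t1, lift Δt δ s)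
            = Δt * ∑ l ∈ Finset.Ico k0 (k0 + W), vext δ l := by
          rw [ht1_def]
          exact integral_lift_blocks hΔt δ hδ1 (by omega) hkWK.le
        have hI3 : (∫ s in t1..t, lift Δt δ s) = (t - t1) * vext δ (k0 + W) := by
          rw [ht1_def]
          refine integral_lift_const hΔt δ hkWK ?_ ?_ ?_
          · exact le_rfl
          · exact ht1b.le
          · push_cast; linarith [hbt2]
        set θ : ℝ := a - (k0 : ℝ) * Δt with hθ_def
        have hθ0 : 0 ≤ θ := by rw [hθ_def]; linarith
        have hθΔt : θ ≤ Δt := by rw [hθ_def]; nlinarith [h0lt]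
        have hbt1θ : t - t1 ≤ θ := by
          rw [hθ_def, ht1cast]
          nlinarith [hbaW]
        have hbt10 : 0 ≤ t - t1 := by linarith
        set S1 : ℝ := ∑ l ∈ Finset.Ico k0 (k0 + W), vext δ l with hS1_def
        set S2 : ℝ := ∑ l ∈ Finset.Ico (k0 + 1) (k0 + W + 1), vext δ l with hS2_def
        have hrel : S1 + vext δ (k0 + W) = vext δ k0 + S2 := by
          rw [hS1_def, hS2_def]
          rw [← Finset.sum_Ico_succ_top (by omega : k0 ≤ k0 + W) (vext δ)]
          rw [Finset.sum_eq_sum_Ico_succ_bot (by omega : k0 < k0 + W + 1) (vext δ)]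
        have hS1g : S1 ≤ (g : ℝ) := hS k0 (k0 + W) (by omega) (by omega) (by omega)
        have hS2g : S2 ≤ (g : ℝ) := hS (k0 + 1) (k0 + W + 1) (by omega) (by omega) (by omega)
        have hv0 : 0 ≤ vext δ k0 := hvpos _
        have hvW : 0 ≤ vext δ (k0 + W) := hvpos _
        rw [hsplit, hI3]
        have hA : (∫ s in a..t1, lift Δt δ s) = Δt * S1 - θ * vext δ k0 := by
          linarith [hsplit2, hI1, hI2]
        rw [hA]
        nlinarith [mul_le_mul_of_nonneg_left hS1g (by linarith : (0:ℝ) ≤ Δt - θ),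
          mul_le_mul_of_nonneg_left hS2g hθ0,
          mul_le_mul_of_nonneg_right hbt1θ hvW]
  refine ⟨part1, ?_, ?_⟩
  · -- Part 2
    rintro δ ⟨⟨hmeas, hrange, hwin⟩, hpos⟩
    have hIδ : ∀ c d : ℝ, 0 ≤ c → c ≤ d → d ≤ (K : ℝ) * Δt →
        IntervalIntegrable δ volume c d := by
      intro c d hc hcd hd
      refine intervalIntegrable_of_abs_le hmeas ?_
      intro s hs
      rw [Set.uIoc_of_le hcd] at hs
      have h1 := hrange s (Set.mem_Icc.2 ⟨by linarith [hs.1], by linarith [hs.2]⟩)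
      exact abs_le.2 ⟨h1.1, h1.2⟩
    have hIabs : ∀ c d : ℝ, 0 ≤ c → c ≤ d → d ≤ (K : ℝ) * Δt →
        IntervalIntegrable (fun s => |δ s|) volume c d := by
      intro c d hc hcd hd
      refine intervalIntegrable_of_abs_le hmeas.abs ?_
      intro s hs
      rw [Set.uIoc_of_le hcd] at hs
      have h1 := hrange s (Set.mem_Icc.2 ⟨by linarith [hs.1], by linarith [hs.2]⟩)
      rw [abs_abs]
      exact abs_le.2 ⟨h1.1, h1.2⟩
    have hbounds : ∀ m : ℕ, m < K → (0 : ℝ) ≤ (m : ℝ) * Δt ∧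
        (m : ℝ) * Δt ≤ ((m : ℝ) + 1) * Δt ∧ ((m : ℝ) + 1) * Δt ≤ (K : ℝ) * Δt := by
      intro m hm
      have h1 : ((m : ℝ) + 1) ≤ (K : ℝ) := by exact_mod_cast (hm : m + 1 ≤ K)
      refine ⟨by positivity, by nlinarith, by nlinarith⟩
    have havg0 : ∀ k : Fin K, 0 ≤ avg Δt K δ k := by
      intro k
      obtain ⟨h1, h2, h3⟩ := hbounds (k : ℕ) k.isLt
      apply mul_nonneg (by positivity)
      apply intervalIntegral.integral_nonneg h2
      intro u hu
      exact (hpos u (Set.mem_Icc.2 ⟨by linarith [hu.1], by linarith [hu.2]⟩)).1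
    have havg1 : ∀ k : Fin K, avg Δt K δ k ≤ 1 := by
      intro k
      obtain ⟨h1, h2, h3⟩ := hbounds (k : ℕ) k.isLt
      have hle : (∫ s in (((k : ℕ) : ℝ) * Δt)..((((k : ℕ) : ℝ) + 1) * Δt), δ s)
          ≤ ∫ _ in (((k : ℕ) : ℝ) * Δt)..((((k : ℕ) : ℝ) + 1) * Δt), (1 : ℝ) := by
        apply intervalIntegral.integral_mono_on h2 (hIδ _ _ h1 h2 h3) intervalIntegrable_const
        intro x hx
        exact (hrange x (Set.mem_Icc.2 ⟨by linarith [hx.1], by linarith [hx.2]⟩)).2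
      rw [intervalIntegral.integral_const, smul_eq_mul, mul_one] at hle
      show (1 / Δt) * _ ≤ 1
      rw [div_mul_eq_mul_div, one_mul, div_le_one hΔt]
      linarith
    refine ⟨⟨fun l => abs_le.2 ⟨by linarith [havg0 l], havg1 l⟩, ?_⟩, havg0⟩
    intro k
    rw [filter_sum_eq (fun l => |avg Δt K δ l|) ((k : ℕ) + 1 - W) (k : ℕ) k.isLt]
    have hterm : ∀ m ∈ Finset.Ico ((k : ℕ) + 1 - W) ((k : ℕ) + 1),
        vext (fun l => |avg Δt K δ l|) m
          = (1 / Δt) * ∫ s in ((fun n : ℕ => (n : ℝ) * Δt) m)..((fun n : ℕ => (n : ℝ) * Δt) (m + 1)), δ s := by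
      intro m hm
      rw [Finset.mem_Ico] at hm
      have hmK : m < K := lt_of_lt_of_le hm.2 k.isLt
      rw [vext_lt _ hmK]
      have h0 : |avg Δt K δ ⟨m, hmK⟩| = avg Δt K δ ⟨m, hmK⟩ := abs_of_nonneg (havg0 _)
      simp only [h0]
      show avg Δt K δ ⟨m, hmK⟩ = (1 / Δt) * ∫ s in ((m : ℝ) * Δt)..(((m + 1 : ℕ) : ℝ) * Δt), δ s
      unfold avg
      norm_num
    rw [Finset.sum_congr rfl hterm, ← Finset.mul_sum]
    have hsum := intervalIntegral.sum_integral_adjacent_intervals_Ico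
      (a := fun n : ℕ => (n : ℝ) * Δt) (f := δ) (μ := volume)
      (by omega : (k : ℕ) + 1 - W ≤ (k : ℕ) + 1) ?_
    swap
    · intro m hm
      have hmK : m < K := lt_of_lt_of_le hm.2 k.isLt
      obtain ⟨h1, h2, h3⟩ := hbounds m hmK
      simp only [Nat.cast_add, Nat.cast_one]
      exact hIδ _ _ h1 h2 h3
    rw [hsum]
    set l0 : ℕ := (k : ℕ) + 1 - W with hl0_def
    set tt : ℝ := (((k : ℕ) + 1 : ℕ) : ℝ) * Δt with htt_def
    have httcast : tt = ((k : ℕ) : ℝ) * Δt + Δt := by rw [htt_def]; push_cast; ring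
    have hkK : ((k : ℕ) : ℝ) + 1 ≤ (K : ℝ) := by exact_mod_cast (k.isLt : (k : ℕ) + 1 ≤ K)
    have httT : tt ≤ (K : ℝ) * Δt := by rw [httcast]; nlinarith
    have htt0 : 0 ≤ tt := by rw [httcast]; positivity
    have hl0le : ((l0 : ℕ) : ℝ) * Δt ≤ tt := by
      rw [htt_def]
      have : l0 ≤ (k : ℕ) + 1 := by omega
      have : ((l0 : ℕ) : ℝ) ≤ (((k : ℕ) + 1 : ℕ) : ℝ) := by exact_mod_cast this
      nlinarith
    have hl00 : (0 : ℝ) ≤ ((l0 : ℕ) : ℝ) * Δt := by positivity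
    have hmax : max (tt - (W : ℝ) * Δt) 0 = ((l0 : ℕ) : ℝ) * Δt := by
      rcases le_or_gt W ((k : ℕ) + 1) with h | h
      · have hWr : (W : ℝ) ≤ ((k : ℕ) : ℝ) + 1 := by exact_mod_cast h
        have hc : ((l0 : ℕ) : ℝ) = ((k : ℕ) : ℝ) + 1 - (W : ℝ) := by
          rw [hl0_def, Nat.cast_sub h]
          push_cast
          ring
        rw [max_eq_left (by rw [httcast]; nlinarith)]
        rw [httcast, hc]
        ring
      · have hWr : ((k : ℕ) : ℝ) + 1 < (W : ℝ) := by exact_mod_cast h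
        have hc : l0 = 0 := by omega
        rw [hc, max_eq_right (by rw [httcast]; nlinarith)]
        norm_num
    have hwink := hwin tt (Set.mem_Icc.2 ⟨htt0, httT⟩)
    rw [hmax] at hwink
    have hmono : (∫ s in (((l0 : ℕ) : ℝ) * Δt)..tt, δ s)
        ≤ ∫ s in (((l0 : ℕ) : ℝ) * Δt)..tt, |δ s| := by
      apply intervalIntegral.integral_mono_on hl0le (hIδ _ _ hl00 hl0le httT)
        (hIabs _ _ hl00 hl0le httT)
      intro x _
      exact le_abs_self _
    calc (1 / Δt) * ∫ s in (((l0 : ℕ) : ℝ) * Δt)..tt, δ s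
        ≤ (1 / Δt) * ((g : ℝ) * Δt) := by
          apply mul_le_mul_of_nonneg_left _ (by positivity)
          exact le_trans hmono hwink
      _ = (g : ℝ) := by field_simp
  · -- Part 3
    intro v hv
    refine ⟨lift Δt v, part1 v hv, ?_⟩
    funext k
    have hkK : ((k : ℕ) : ℝ) + 1 ≤ (K : ℝ) := by exact_mod_cast (k.isLt : (k : ℕ) + 1 ≤ K)
    have heq : ∫ s in (((k : ℕ) : ℝ) * Δt)..((((k : ℕ) : ℝ) + 1) * Δt), lift Δt v s
        = ((((k : ℕ) : ℝ) + 1) * Δt - ((k : ℕ) : ℝ) * Δt) * vext v (k : ℕ) :=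
      integral_lift_const hΔt v k.isLt le_rfl (by nlinarith) le_rfl
    show (1 / Δt) * _ = v k
    rw [heq, vext_lt v k.isLt, Fin.eta]
    field_simp
    ring

/-- for the refined discretization with `N` subintervals per
trading interval, `L_N(D⁺_{KN}) ⊆ D⁺` and `L†_N(D⁺) = D⁺_{KN}`. -/
theorem stmt_14 (Δt : ℝ) (K W g N : ℕ) (hΔt : 0 < Δt) (hN : 0 < N)
    (hg : 0 < g) (hgW : g ≤ W) (hWK : W ≤ K)
    (T Γ γ : ℝ) (hT : T = K * Δt) (hΓ : Γ = W * Δt) (hγ : γ = g * Δt) :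
    (∀ δ ∈ DKplus (K * N) (N * W) (N * g), lift (Δt / N) δ ∈ DsetPlus T Γ γ) ∧
    (∀ δ ∈ DsetPlus T Γ γ, avg (Δt / N) (K * N) δ ∈ DKplus (K * N) (N * W) (N * g)) ∧
    (∀ v ∈ DKplus (K * N) (N * W) (N * g),
      ∃ δ ∈ DsetPlus T Γ γ, avg (Δt / N) (K * N) δ = v) := by
  have hΔtN : 0 < Δt / N := by positivity
  have h := main_discretization (Δt / N) (K * N) (N * W) (N * g) hΔtN
    (by positivity) (Nat.mul_le_mul_left N hgW) (by rw [Nat.mul_comm K N]; exact Nat.mul_le_mul_left N hWK)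
  have hNne : (N : ℝ) ≠ 0 := by positivity
  have hT' : ((K * N : ℕ) : ℝ) * (Δt / N) = T := by
    rw [hT]; push_cast; field_simp
  have hΓ' : ((N * W : ℕ) : ℝ) * (Δt / N) = Γ := by
    rw [hΓ]; push_cast; field_simp
  have hγ' : ((N * g : ℕ) : ℝ) * (Δt / N) = γ := by
    rw [hγ]; push_cast; field_simp
  rw [hT', hΓ', hγ'] at h
  exact h
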